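/- Let G be a free group with basis g₁, …, g_n, let H be a free group, let φ, ψ : G → H be homomorphisms, and let u, v ∈ H be distinct. Let φ^v : G → H be given by φ^v(g) = v⁻¹ φ(g) v. Suppose φ^v ∗ ψ : G ∗ G → H has remnant, and suppose that for each generator g of G ∗ G, the remnant word Rem_{φ^v ∗ ψ}(g) does not fully cancel in the reduced form of either of the products ((φ^v ∗ ψ)(g)) · v⁻¹u and u⁻¹v · ((φ^v ∗ ψ)(g)). Then u and v are in different doubly-twisted conjugacy classes: there is no g ∈ G with v = φ(g) u ψ(g)⁻¹. -/

import Mathlib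

/-! Basic definitions: cancellation in products of reduced words, remnant
of a homomorphism of free groups, and assorted constructions. -/

open FreeGroup

/-- `bpow w e` is `w` if `e = true` (exponent `+1`) and `w⁻¹` if `e = false`
(exponent `-1`). -/
def bpow {β : Type*} (w : FreeGroup β) (e : Bool) : FreeGroup β := if e then w else w⁻¹

/-- The number of letters cancelled between `a` and `b` when the product `a * b`
is brought to reduced form: `(|a| + |b| - |a * b|) / 2`. -/
def cancel {β : Type*} [DecidableEq β] (a b : FreeGroup β) : ℕ :=
  (FreeGroup.norm a + FreeGroup.norm b - FreeGroup.norm (a * b)) / 2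

/-- The maximal number of letters of the reduced word `η(gᵢ)` cancelled on its left
in a product `η(gⱼ)^ε * η(gᵢ)`, over all `j` and `ε = ±1` except `j = i, ε = -1`. -/
def maxLeftCancel {α β : Type*} [Fintype α] [DecidableEq α] [DecidableEq β]
    (η : FreeGroup α →* FreeGroup β) (i : α) : ℕ :=
  (Finset.univ.filter fun je : α × Bool => je ≠ (i, false)).sup
    fun je => cancel (bpow (η (FreeGroup.of je.1)) je.2) (η (FreeGroup.of i))

/-- The maximal number of letters of the reduced word `η(gᵢ)` cancelled on its right
in a product `η(gᵢ) * η(gⱼ)^ε`, over all `j` and `ε = ±1` except `j = i, ε = -1`. -/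
def maxRightCancel {α β : Type*} [Fintype α] [DecidableEq α] [DecidableEq β]
    (η : FreeGroup α →* FreeGroup β) (i : α) : ℕ :=
  (Finset.univ.filter fun je : α × Bool => je ≠ (i, false)).sup
    fun je => cancel (η (FreeGroup.of i)) (bpow (η (FreeGroup.of je.1)) je.2)

/-- `η` has remnant: for each generator `gᵢ`, the maximal left cancellation plus the
maximal right cancellation is strictly less than the length of `η(gᵢ)`, so a nonempty
middle subword (the remnant `Rem_η(gᵢ)`) always survives. -/
def HasRemnant {α β : Type*} [Fintype α] [DecidableEq α] [DecidableEq β]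
    (η : FreeGroup α →* FreeGroup β) : Prop :=
  ∀ i : α, maxLeftCancel η i + maxRightCancel η i < FreeGroup.norm (η (FreeGroup.of i))

/-- The length `|Rem_η(gᵢ)|` of the remnant word of `gᵢ`: the part of `η(gᵢ)` surviving
all maximal cancellations. -/
def remnantLength {α β : Type*} [Fintype α] [DecidableEq α] [DecidableEq β]
    (η : FreeGroup α →* FreeGroup β) (i : α) : ℕ :=
  FreeGroup.norm (η (FreeGroup.of i)) - maxLeftCancel η i - maxRightCancel η i

/-- The remnant `Rem_η(gᵢ)` occupies positions `[maxLeftCancel η i, |η(gᵢ)| - maxRightCancel η i)`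
of the reduced word `η(gᵢ)`.  It does not fully cancel in the reduced form of the product
`η(gᵢ) * w` iff the number of letters cancelled from the right end of `η(gᵢ)`, namely
`cancel (η(gᵢ)) w`, leaves some remnant letter alive. -/
def remnantSurvivesRightMul {α β : Type*} [Fintype α] [DecidableEq α] [DecidableEq β]
    (η : FreeGroup α →* FreeGroup β) (i : α) (w : FreeGroup β) : Prop :=
  cancel (η (FreeGroup.of i)) w + maxLeftCancel η i < FreeGroup.norm (η (FreeGroup.of i))

/-- The remnant `Rem_η(gᵢ)` does not fully cancel in the reduced form of the
product `w * η(gᵢ)`. -/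
def remnantSurvivesLeftMul {α β : Type*} [Fintype α] [DecidableEq α] [DecidableEq β]
    (η : FreeGroup α →* FreeGroup β) (i : α) (w : FreeGroup β) : Prop :=
  cancel w (η (FreeGroup.of i)) + maxRightCancel η i < FreeGroup.norm (η (FreeGroup.of i))

/-- The homomorphism `φ ∗ ψ : G ∗ G → H` on the free product `G ∗ G`, realized as the
free group on `α ⊕ α`, sending the generators of the first factor via `φ` and those of
the second factor via `ψ`. -/
def prodHom {α β : Type*} (φ ψ : FreeGroup α →* FreeGroup β) :
    FreeGroup (α ⊕ α) →* FreeGroup β :=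
  FreeGroup.lift (Sum.elim (fun i => φ (FreeGroup.of i)) (fun i => ψ (FreeGroup.of i)))

/-- `φ^v : g ↦ v⁻¹ φ(g) v`. -/
def conjHom {G H : Type*} [Group G] [Group H] (φ : G →* H) (v : H) : G →* H :=
  ((MulAut.conj v⁻¹).toMonoidHom).comp φ

/-- The equalizer subgroup `Eq(φ, ψ) = {g : φ g = ψ g}`. -/
def eqSubgroup {G H : Type*} [Group G] [Group H] (φ ψ : G →* H) : Subgroup G where
  carrier := {g | φ g = ψ g}
  one_mem' := by simp
  mul_mem' := by
    intro a b ha hb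
    simp only [Set.mem_setOf_eq] at *
    rw [_root_.map_mul, _root_.map_mul, ha, hb]
  inv_mem' := by
    intro a ha
    simp only [Set.mem_setOf_eq] at *
    rw [_root_.map_inv, _root_.map_inv, ha]



open FreeGroup List

namespace RemProof

variable {α : Type*}

/-- No cancellation between adjacent letters (matches `reduce`'s test). -/
def NC (a b : α × Bool) : Prop := ¬(a.1 = b.1 ∧ a.2 = !b.2)

variable [DecidableEq α]

lemma chain'_reduce : ∀ L : List (α × Bool), List.Chain' NC (FreeGroup.reduce L)
  | [] => List.isChain_nil
  | x :: L => by
    have ih := chain'_reduce L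
    rw [FreeGroup.reduce.cons]
    rcases h : FreeGroup.reduce L with _ | ⟨hd, tl⟩
    · exact List.isChain_singleton _
    · rw [h] at ih
      dsimp only
      split_ifs with hc
      · exact ih.tail
      · exact List.isChain_cons_cons.2 ⟨hc, ih⟩

lemma reduce_eq_self : ∀ {L : List (α × Bool)}, List.Chain' NC L → FreeGroup.reduce L = L
  | [], _ => rfl
  | [x], _ => rfl
  | x :: y :: L, h => by
    have ht : FreeGroup.reduce (y :: L) = y :: L := reduce_eq_self h.tail
    rw [FreeGroup.reduce.cons, ht]
    dsimp only
    rw [if_neg (List.isChain_cons_cons.1 h).1]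

lemma chain'_toWord (x : FreeGroup α) : List.Chain' NC x.toWord := by
  rw [← FreeGroup.reduce_toWord]; exact chain'_reduce _

lemma invRev_concat (S : List (α × Bool)) (a : α × Bool) :
    FreeGroup.invRev (S ++ [a]) = (a.1, !a.2) :: FreeGroup.invRev S := by
  simp [FreeGroup.invRev]

lemma exists_decomp :
    ∀ (n : ℕ) (L₁ L₂ : List (α × Bool)), L₁.length ≤ n →
      List.Chain' NC L₁ → List.Chain' NC L₂ →
      ∃ P S Q, L₁ = P ++ S ∧ L₂ = FreeGroup.invRev S ++ Q ∧
        FreeGroup.reduce (L₁ ++ L₂) = P ++ Q := by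
  intro n
  induction n with
  | zero =>
    intro L₁ L₂ hlen h₁ h₂
    have : L₁ = [] := List.eq_nil_of_length_eq_zero (Nat.le_zero.1 hlen)
    subst this
    exact ⟨[], [], L₂, by simp, by simp [FreeGroup.invRev], by simp [reduce_eq_self h₂]⟩
  | succ n ih =>
    intro L₁ L₂ hlen h₁ h₂
    by_cases hj : ∀ a ∈ L₁.getLast?, ∀ c ∈ L₂.head?, NC a c
    · exact ⟨L₁, [], L₂, by simp, by simp [FreeGroup.invRev],
        reduce_eq_self (h₁.append h₂ hj)⟩
    · push_neg at hj
      obtain ⟨a, ha, c, hc, hnc⟩ := hj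
      have hac : a.1 = c.1 ∧ a.2 = !c.2 := not_not.1 hnc
      have hL₁ : L₁.dropLast ++ [a] = L₁ := List.dropLast_append_getLast? a ha
      have hL₂ : L₂ = c :: L₂.tail := by
        rcases L₂ with _ | ⟨c', t⟩
        · simp at hc
        · simp only [List.head?_cons, Option.mem_some_iff] at hc
          rw [hc]; rfl
      have hc2 : c = (a.1, !a.2) := by
        ext
        · exact hac.1.symm
        · rw [hac.2, Bool.not_not]
      have hkey : L₁ ++ L₂ = L₁.dropLast ++ (a.1, a.2) :: (a.1, !a.2) :: L₂.tail := by
        conv_lhs => rw [← hL₁, hL₂]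
        simp [hc2]
      have hred : FreeGroup.reduce (L₁ ++ L₂) = FreeGroup.reduce (L₁.dropLast ++ L₂.tail) := by
        rw [hkey]
        exact FreeGroup.reduce.Step.eq (FreeGroup.Red.Step.not)
      have hlen' : L₁.dropLast.length ≤ n := by
        have : L₁ ≠ [] := by rintro rfl; simp at ha
        have := List.length_pos_iff.2 this
        simp only [List.length_dropLast]
        omega
      obtain ⟨P, S, Q, e₁, e₂, e₃⟩ := ih L₁.dropLast L₂.tail hlen'
        (h₁.prefix (List.dropLast_prefix _)) h₂.tail
      refine ⟨P, S ++ [a], Q, ?_, ?_, ?_⟩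
      · rw [← hL₁, e₁, List.append_assoc]
      · rw [invRev_concat, hL₂, e₂, hc2]
        simp
      · rw [hred, e₃]

end RemProof

section Part2

open FreeGroup List RemProof

variable {β : Type*} [DecidableEq β]

namespace RemProof

lemma mul_toWord (x y : FreeGroup β) :
    (x * y).toWord = FreeGroup.reduce (x.toWord ++ y.toWord) := by
  have : x * y = FreeGroup.mk (x.toWord ++ y.toWord) := by
    rw [← FreeGroup.mul_mk, FreeGroup.mk_toWord, FreeGroup.mk_toWord]
  rw [this, FreeGroup.toWord_mk]

lemma cancel_spec (x y : FreeGroup β) :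
    ∃ P S Q, x.toWord = P ++ S ∧ y.toWord = FreeGroup.invRev S ++ Q ∧
      (x * y).toWord = P ++ Q ∧ cancel x y = S.length := by
  obtain ⟨P, S, Q, h1, h2, h3⟩ := exists_decomp x.toWord.length x.toWord y.toWord le_rfl
    (chain'_toWord x) (chain'_toWord y)
  rw [← mul_toWord] at h3
  refine ⟨P, S, Q, h1, h2, h3, ?_⟩
  have e1 : FreeGroup.norm x = P.length + S.length := by rw [FreeGroup.norm, h1]; simp
  have e2 : FreeGroup.norm y = S.length + Q.length := by
    rw [FreeGroup.norm, h2]; simp [FreeGroup.invRev_length]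
  have e3 : FreeGroup.norm (x * y) = P.length + Q.length := by rw [FreeGroup.norm, h3]; simp
  have : FreeGroup.norm x + FreeGroup.norm y - FreeGroup.norm (x * y) = 2 * S.length := by
    omega
  rw [cancel, this, Nat.mul_div_cancel_left _ (by norm_num)]

lemma norm_mul_cancel (x y : FreeGroup β) :
    FreeGroup.norm (x * y) + 2 * cancel x y = FreeGroup.norm x + FreeGroup.norm y := by
  obtain ⟨P, S, Q, h1, h2, h3, h4⟩ := cancel_spec x y
  have e1 : FreeGroup.norm x = P.length + S.length := by rw [FreeGroup.norm, h1]; simp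
  have e2 : FreeGroup.norm y = S.length + Q.length := by
    rw [FreeGroup.norm, h2]; simp [FreeGroup.invRev_length]
  have e3 : FreeGroup.norm (x * y) = P.length + Q.length := by rw [FreeGroup.norm, h3]; simp
  omega

lemma cancel_le_left (x y : FreeGroup β) : cancel x y ≤ FreeGroup.norm x := by
  obtain ⟨P, S, Q, h1, _, _, h4⟩ := cancel_spec x y
  have e1 : FreeGroup.norm x = P.length + S.length := by rw [FreeGroup.norm, h1]; simp
  omega

lemma cancel_le_right (x y : FreeGroup β) : cancel x y ≤ FreeGroup.norm y := by
  obtain ⟨P, S, Q, _, h2, _, h4⟩ := cancel_spec x y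
  have e2 : FreeGroup.norm y = S.length + Q.length := by
    rw [FreeGroup.norm, h2]; simp [FreeGroup.invRev_length]
  omega

lemma cancel_one (x : FreeGroup β) : cancel x 1 = 0 := by
  simp [cancel, FreeGroup.norm_one]

lemma cancel_inv (a b : FreeGroup β) : cancel a b = cancel b⁻¹ a⁻¹ := by
  unfold cancel
  rw [← mul_inv_rev, FreeGroup.norm_inv_eq, FreeGroup.norm_inv_eq, FreeGroup.norm_inv_eq,
    add_comm (FreeGroup.norm b)]

lemma cancel_eq_norm_of_inv_mul (w E : FreeGroup β) (h : w = E) :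
    cancel w⁻¹ E = FreeGroup.norm E := by
  subst h
  have : FreeGroup.norm w⁻¹ + FreeGroup.norm w - FreeGroup.norm (w⁻¹ * w) = 2 * FreeGroup.norm w := by
    rw [inv_mul_cancel, FreeGroup.norm_one, FreeGroup.norm_inv_eq]
    omega
  rw [cancel, this, Nat.mul_div_cancel_left _ (by norm_num)]

/-- Key lemma: if the cancellation in `a*b` and that in `b*c` do not together
consume all of `b`, then the cancellation of `a` against `b*c` equals that against `b`. -/
lemma cancel_mul_right (a b c : FreeGroup β)
    (h : cancel a b + cancel b c < FreeGroup.norm b) :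
    cancel a (b * c) = cancel a b := by
  obtain ⟨P₁, S₁, Q₁, a1, a2, a3, a4⟩ := cancel_spec a b
  obtain ⟨P₂, S₂, Q₂, b1, b2, b3, b4⟩ := cancel_spec b c
  have hb : FreeGroup.invRev S₁ ++ Q₁ = P₂ ++ S₂ := by rw [← a2, ← b1]
  have hnormb : FreeGroup.norm b = S₁.length + Q₁.length := by
    rw [FreeGroup.norm, a2]; simp [FreeGroup.invRev_length]
  rw [a4, b4] at h
  have hQS : S₂.length < Q₁.length := by omega
  -- decompose
  obtain ⟨M, hM1, hM2⟩ : ∃ M, P₂ = FreeGroup.invRev S₁ ++ M ∧ Q₁ = M ++ S₂ := by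
    rcases List.append_eq_append_iff.1 hb with ⟨M, hM1, hM2⟩ | ⟨M, hM1, hM2⟩
    · exact ⟨M, hM1, hM2⟩
    · exfalso
      have := congrArg List.length hM2
      simp at this
      omega
  have hMne : M ≠ [] := by
    rintro rfl
    have := congrArg List.length hM2
    simp at this
    omega
  rcases M with _ | ⟨m, M'⟩
  · exact absurd rfl hMne
  -- chains
  have cab : List.Chain' NC (P₁ ++ (m :: (M' ++ S₂))) := by
    have := chain'_toWord (a * b)
    rw [a3, hM2] at this
    simpa using this
  have cbc : List.Chain' NC ((FreeGroup.invRev S₁ ++ (m :: M')) ++ Q₂) := by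
    have := chain'_toWord (b * c)
    rw [b3, hM1] at this
    simpa using this
  obtain ⟨cP₁, cMS, jPM⟩ := List.isChain_append.1 cab
  obtain ⟨cPM, cQ₂, jMQ⟩ := List.isChain_append.1 cbc
  have cM : List.Chain' NC (m :: M') := cMS.prefix ⟨S₂, by simp⟩
  have cMQ : List.Chain' NC ((m :: M') ++ Q₂) := by
    refine cM.append cQ₂ ?_
    intro x hx y hy
    refine jMQ x ?_ y hy
    rw [List.getLast?_append_cons]
    exact hx
  have cbig : List.Chain' NC (P₁ ++ ((m :: M') ++ Q₂)) := by
    refine cP₁.append cMQ ?_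
    intro x hx y hy
    simp only [List.cons_append, List.head?_cons, Option.mem_some_iff] at hy
    subst hy
    exact jPM x hx m (by simp)
  -- group identity
  have hgrp : a * (b * c) = FreeGroup.mk (P₁ ++ ((m :: M') ++ Q₂)) := by
    have ea : a = FreeGroup.mk (P₁ ++ S₁) := by rw [← a1, FreeGroup.mk_toWord]
    have ebc : b * c = FreeGroup.mk ((FreeGroup.invRev S₁ ++ (m :: M')) ++ Q₂) := by
      rw [← hM1, ← b3, FreeGroup.mk_toWord]
    rw [ea, ebc]
    rw [← FreeGroup.mul_mk, ← FreeGroup.mul_mk, ← FreeGroup.mul_mk, ← FreeGroup.mul_mk,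
      ← FreeGroup.mul_mk, ← FreeGroup.inv_mk]
    group
  have hword : (a * (b * c)).toWord = P₁ ++ ((m :: M') ++ Q₂) := by
    rw [hgrp, FreeGroup.toWord_mk, reduce_eq_self cbig]
  -- compute
  have e1 : FreeGroup.norm a = P₁.length + S₁.length := by rw [FreeGroup.norm, a1]; simp
  have e2 : FreeGroup.norm (b * c) = (S₁.length + (M'.length + 1)) + Q₂.length := by
    rw [FreeGroup.norm, b3, hM1]
    simp [FreeGroup.invRev_length]
    omega
  have e3 : FreeGroup.norm (a * (b * c)) = P₁.length + ((M'.length + 1) + Q₂.length) := by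
    rw [FreeGroup.norm, hword]; simp; omega
  have : FreeGroup.norm a + FreeGroup.norm (b * c) - FreeGroup.norm (a * (b * c))
      = 2 * S₁.length := by omega
  rw [cancel, this, Nat.mul_div_cancel_left _ (by norm_num), a4]

end RemProof
end Part2
section Part3

open FreeGroup List

namespace RemProof

variable {α β : Type*} [Fintype α] [DecidableEq α] [DecidableEq β]

lemma bpow_inv (w : FreeGroup β) (e : Bool) : (bpow w e)⁻¹ = bpow w (!e) := by
  cases e <;> simp [bpow]

lemma norm_bpow (w : FreeGroup β) (e : Bool) :
    FreeGroup.norm (bpow w e) = FreeGroup.norm w := by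
  cases e <;> simp [bpow, FreeGroup.norm_inv_eq]

/-- The signed image of a single letter. -/
def bl (η : FreeGroup α →* FreeGroup β) (p : α × Bool) : FreeGroup β :=
  bpow (η (FreeGroup.of p.1)) p.2

/-- Right-cancellation budget of a signed letter. -/
def Rb (η : FreeGroup α →* FreeGroup β) (p : α × Bool) : ℕ :=
  if p.2 then maxRightCancel η p.1 else maxLeftCancel η p.1

/-- Left-cancellation budget of a signed letter. -/
def Lb (η : FreeGroup α →* FreeGroup β) (p : α × Bool) : ℕ :=
  if p.2 then maxLeftCancel η p.1 else maxRightCancel η p.1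

lemma le_maxRightCancel (η : FreeGroup α →* FreeGroup β) (i : α) (je : α × Bool)
    (h : je ≠ (i, false)) :
    cancel (η (FreeGroup.of i)) (bpow (η (FreeGroup.of je.1)) je.2) ≤ maxRightCancel η i :=
  Finset.le_sup (f := fun je => cancel (η (FreeGroup.of i)) (bpow (η (FreeGroup.of je.1)) je.2))
    (b := je) (Finset.mem_filter.2 ⟨Finset.mem_univ je, h⟩)

lemma le_maxLeftCancel (η : FreeGroup α →* FreeGroup β) (i : α) (je : α × Bool)
    (h : je ≠ (i, false)) :
    cancel (bpow (η (FreeGroup.of je.1)) je.2) (η (FreeGroup.of i)) ≤ maxLeftCancel η i :=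
  Finset.le_sup (f := fun je => cancel (bpow (η (FreeGroup.of je.1)) je.2) (η (FreeGroup.of i)))
    (b := je) (Finset.mem_filter.2 ⟨Finset.mem_univ je, h⟩)

lemma pairwise_Rb (η : FreeGroup α →* FreeGroup β) (p q : α × Bool) (h : NC p q) :
    cancel (bl η p) (bl η q) ≤ Rb η p := by
  rcases p with ⟨c, e⟩
  rcases q with ⟨d, f⟩
  simp only [NC, not_and] at h
  cases e
  · -- e = false : bl = (η c)⁻¹ ; use maxLeftCancel
    have : cancel (bl η (c, false)) (bl η (d, f))
        = cancel (bpow (η (FreeGroup.of d)) (!f)) (η (FreeGroup.of c)) := by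
      rw [cancel_inv (bl η (c, false)) (bl η (d, f))]
      simp only [bl, bpow_inv]
      cases f <;> simp [bpow]
    rw [this]
    refine le_trans (le_of_eq rfl) ?_
    have hne : (d, !f) ≠ (c, false) := by
      intro heq
      obtain ⟨h1, h2⟩ := Prod.mk.injEq .. ▸ heq
      apply h h1.symm
      cases f <;> simp_all
    simpa [Rb] using le_maxLeftCancel η c (d, !f) hne
  · -- e = true
    have hne : (d, f) ≠ (c, false) := by
      intro heq
      obtain ⟨h1, h2⟩ := Prod.mk.injEq .. ▸ heq
      apply h h1.symm
      cases f <;> simp_all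
    have := le_maxRightCancel η c (d, f) hne
    simpa [Rb, bl, bpow] using this

lemma pairwise_Lb (η : FreeGroup α →* FreeGroup β) (p q : α × Bool) (h : NC p q) :
    cancel (bl η p) (bl η q) ≤ Lb η q := by
  rcases p with ⟨c, e⟩
  rcases q with ⟨d, f⟩
  simp only [NC, not_and] at h
  cases f
  · -- f = false : use maxRightCancel η d
    have : cancel (bl η (c, e)) (bl η (d, false))
        = cancel (η (FreeGroup.of d)) (bpow (η (FreeGroup.of c)) (!e)) := by
      rw [cancel_inv (bl η (c, e)) (bl η (d, false))]
      simp only [bl, bpow_inv]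
      simp [bpow]
    rw [this]
    have hne : (c, !e) ≠ (d, false) := by
      intro heq
      obtain ⟨h1, h2⟩ := Prod.mk.injEq .. ▸ heq
      apply h h1
      cases e <;> simp_all
    simpa [Lb] using le_maxRightCancel η d (c, !e) hne
  · -- f = true
    have hne : (c, e) ≠ (d, false) := by
      intro heq
      obtain ⟨h1, h2⟩ := Prod.mk.injEq .. ▸ heq
      apply h h1
      cases e <;> simp_all
    have := le_maxLeftCancel η d (c, e) hne
    simpa [Lb, bl, bpow] using this

lemma Lb_add_Rb (η : FreeGroup α →* FreeGroup β) (hrem : HasRemnant η) (p : α × Bool) :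
    Lb η p + Rb η p < FreeGroup.norm (bl η p) := by
  rcases p with ⟨c, e⟩
  have := hrem c
  cases e <;> simp [Lb, Rb, bl, norm_bpow] <;> omega

lemma eprod_cancel (η : FreeGroup α →* FreeGroup β) (hrem : HasRemnant η) :
    ∀ (ℓ : List (α × Bool)) (p : α × Bool), List.Chain' NC (p :: ℓ) →
      cancel (bl η p) ((ℓ.map (bl η)).prod) ≤ Rb η p
  | [], p, _ => by simp [cancel_one]
  | q :: t, p, h => by
    have hpq : NC p q := (List.isChain_cons_cons.1 h).1
    have ih := eprod_cancel η hrem t q h.tail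
    have hlt : cancel (bl η p) (bl η q) + cancel (bl η q) ((t.map (bl η)).prod)
        < FreeGroup.norm (bl η q) :=
      lt_of_le_of_lt (add_le_add (pairwise_Lb η p q hpq) ih) (Lb_add_Rb η hrem q)
    have : ((q :: t).map (bl η)).prod = bl η q * (t.map (bl η)).prod := by simp
    rw [this, cancel_mul_right _ _ _ hlt]
    exact pairwise_Rb η p q hpq

lemma main_ne (η : FreeGroup α →* FreeGroup β) (hrem : HasRemnant η) (w : FreeGroup β)
    (p : α × Bool) (t : List (α × Bool)) (hch : List.Chain' NC (p :: t))
    (hw : cancel w⁻¹ (bl η p) + Rb η p < FreeGroup.norm (bl η p)) :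
    w ≠ (((p :: t).map (bl η)).prod) := by
  intro heq
  set E' := (t.map (bl η)).prod with hE'
  have hs : cancel (bl η p) E' ≤ Rb η p := eprod_cancel η hrem t p hch
  have h2 : cancel w⁻¹ (bl η p * E') = cancel w⁻¹ (bl η p) := by
    refine cancel_mul_right _ _ _ ?_
    exact lt_of_le_of_lt (add_le_add_right hs _) hw
  have hEp : ((p :: t).map (bl η)).prod = bl η p * E' := by simp [hE']
  rw [hEp] at heq
  have hcan : cancel w⁻¹ (bl η p * E') = FreeGroup.norm (bl η p * E') :=
    cancel_eq_norm_of_inv_mul w _ heq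
  have hnorm := norm_mul_cancel (bl η p) E'
  have hle : cancel (bl η p) E' ≤ FreeGroup.norm E' := cancel_le_right _ _
  omega

end RemProof
end Part3
section Part4

open FreeGroup List

namespace RemProof

variable {α β γ : Type*} [DecidableEq β]

lemma mem_of_getLast? {l : List γ} {x : γ} (h : x ∈ l.getLast?) : x ∈ l := by
  obtain ⟨h1, rfl⟩ := List.mem_getLast?_eq_getLast h
  exact List.getLast_mem h1

lemma eta_mk [Fintype α] [DecidableEq α] (η : FreeGroup α →* FreeGroup β) :
    ∀ L : List (α × Bool), η (FreeGroup.mk L) = (L.map (bl η)).prod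
  | [] => by rw [← FreeGroup.one_eq_mk]; simp
  | p :: L => by
    have h1 : FreeGroup.mk (p :: L) = FreeGroup.mk [p] * FreeGroup.mk L := by
      rw [FreeGroup.mul_mk]; rfl
    rw [h1, _root_.map_mul, eta_mk η L]
    simp only [List.map_cons, List.prod_cons]
    congr 1
    rcases p with ⟨a, e⟩
    have hof : FreeGroup.of a = FreeGroup.mk [(a, true)] := rfl
    cases e
    · have h2 : FreeGroup.mk [(a, false)] = (FreeGroup.of a)⁻¹ := by
        rw [hof, FreeGroup.inv_mk]
        congr 1
      rw [h2, _root_.map_inv]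
      simp [bl, bpow]
    · rw [← hof]
      simp [bl, bpow]

lemma chain'_invRev {L : List (β × Bool)} (h : List.Chain' NC L) :
    List.Chain' NC (FreeGroup.invRev L) := by
  unfold FreeGroup.invRev
  refine List.isChain_reverse.2 ?_
  refine (List.isChain_map _).2 (h.imp ?_)
  intro a b hab
  rintro ⟨g1, g2⟩
  simp only [Bool.not_not] at g2
  exact hab ⟨g1.symm, g2.symm⟩

lemma toWord_map [DecidableEq α] [DecidableEq γ] (f : α → γ) (hf : Function.Injective f)
    (x : FreeGroup α) :
    (FreeGroup.map f x).toWord = x.toWord.map (fun p => (f p.1, p.2)) := by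
  conv_lhs => rw [← FreeGroup.mk_toWord (x := x)]
  rw [FreeGroup.map.mk, FreeGroup.toWord_mk]
  apply reduce_eq_self
  refine (List.isChain_map _).2 ((chain'_toWord x).imp ?_)
  intro a b hab
  rintro ⟨g1, g2⟩
  exact hab ⟨hf g1, g2⟩

end RemProof
end Part4


open FreeGroup List RemProof in
/-- If `u ≠ v`, `φᵛ ∗ ψ` has remnant, and for each generator `c` of
`G ∗ G` the remnant `Rem_{φᵛ ∗ ψ}(c)` does not fully cancel in the reduced forms of
`((φᵛ ∗ ψ)(c)) ⬝ v⁻¹u` and `u⁻¹v ⬝ ((φᵛ ∗ ψ)(c))`, then `u` and `v` are in different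
doubly-twisted conjugacy classes. -/
theorem classes_distinct_of_remnant_survives {n : ℕ} {β : Type*} [DecidableEq β]
    (φ ψ : FreeGroup (Fin n) →* FreeGroup β) (u v : FreeGroup β) (huv : u ≠ v)
    (hrem : HasRemnant (prodHom (conjHom φ v) ψ))
    (hR : ∀ c : Fin n ⊕ Fin n,
      remnantSurvivesRightMul (prodHom (conjHom φ v) ψ) c (v⁻¹ * u))
    (hL : ∀ c : Fin n ⊕ Fin n,
      remnantSurvivesLeftMul (prodHom (conjHom φ v) ψ) c (u⁻¹ * v)) :
    ¬ ∃ g : FreeGroup (Fin n), v = φ g * u * (ψ g)⁻¹ := by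
  rintro ⟨g, hg⟩
  set η := prodHom (conjHom φ v) ψ with hη
  have hcomp1 : η.comp (FreeGroup.map Sum.inl) = conjHom φ v := by
    apply FreeGroup.ext_hom
    intro a
    simp [hη, prodHom, FreeGroup.map.of, FreeGroup.lift_apply_of]
  have hcomp2 : η.comp (FreeGroup.map Sum.inr) = ψ := by
    apply FreeGroup.ext_hom
    intro a
    simp [hη, prodHom, FreeGroup.map.of, FreeGroup.lift_apply_of]
  have hinl : ∀ x : FreeGroup (Fin n), η (FreeGroup.map Sum.inl x) = v⁻¹ * φ x * v := by
    intro x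
    have := DFunLike.congr_fun hcomp1 x
    simp only [MonoidHom.comp_apply] at this
    rw [this]
    simp [conjHom, MulAut.conj_apply]
  have hinr : ∀ x : FreeGroup (Fin n), η (FreeGroup.map Sum.inr x) = ψ x := by
    intro x
    have := DFunLike.congr_fun hcomp2 x
    simpa using this
  have key : v⁻¹ * u = η ((FreeGroup.map Sum.inl g)⁻¹ * FreeGroup.map Sum.inr g) := by
    rw [_root_.map_mul, _root_.map_inv, hinl, hinr, hg]
    group
  by_cases hg1 : g = 1
  · subst hg1
    rw [show (FreeGroup.map (Sum.inl : Fin n → Fin n ⊕ Fin n) (1 : FreeGroup (Fin n))) = 1 from by simp,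
      show (FreeGroup.map (Sum.inr : Fin n → Fin n ⊕ Fin n) (1 : FreeGroup (Fin n))) = 1 from by simp,
      inv_one, one_mul, _root_.map_one] at key
    exact huv (inv_mul_eq_one.1 key).symm
  · set L1 := (FreeGroup.map (Sum.inl : Fin n → Fin n ⊕ Fin n) g).toWord with hL1d
    set L2 := (FreeGroup.map (Sum.inr : Fin n → Fin n ⊕ Fin n) g).toWord with hL2d
    have hL1 : L1 = g.toWord.map (fun p => (Sum.inl p.1, p.2)) :=
      toWord_map _ Sum.inl_injective g
    have hL2 : L2 = g.toWord.map (fun p => (Sum.inr p.1, p.2)) :=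
      toWord_map _ Sum.inr_injective g
    have hgne : g.toWord ≠ [] := by rwa [ne_eq, FreeGroup.toWord_eq_nil_iff]
    have hmk : FreeGroup.mk (FreeGroup.invRev L1 ++ L2)
        = (FreeGroup.map Sum.inl g)⁻¹ * FreeGroup.map Sum.inr g := by
      rw [← FreeGroup.mul_mk, ← FreeGroup.inv_mk, hL1d, hL2d,
        FreeGroup.mk_toWord, FreeGroup.mk_toWord]
    have c1 : List.Chain' NC (FreeGroup.invRev L1) := chain'_invRev (chain'_toWord _)
    have c2 : List.Chain' NC L2 := chain'_toWord _
    have hchain : List.Chain' NC (FreeGroup.invRev L1 ++ L2) := by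
      refine c1.append c2 ?_
      intro x hx y hy
      have hx' : x ∈ FreeGroup.invRev L1 := RemProof.mem_of_getLast? hx
      have hy' : y ∈ L2 := List.mem_of_mem_head? hy
      rw [hL1] at hx'
      rw [hL2] at hy'
      simp only [FreeGroup.invRev, List.mem_reverse, List.mem_map] at hx'
      obtain ⟨q, ⟨s, -, rfl⟩, rfl⟩ := hx'
      simp only [List.mem_map] at hy'
      obtain ⟨r, -, rfl⟩ := hy'
      intro hcon
      obtain ⟨h1, -⟩ := hcon
      simp at h1
    have hne : FreeGroup.invRev L1 ++ L2 ≠ [] := by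
      intro hcon
      rcases List.append_eq_nil_iff.1 hcon with ⟨he1, -⟩
      rw [hL1] at he1
      simp [FreeGroup.invRev] at he1
      exact hg1 he1
    obtain ⟨p, t, hpt⟩ : ∃ p t, FreeGroup.invRev L1 ++ L2 = p :: t := by
      rcases hℓ : FreeGroup.invRev L1 ++ L2 with _ | ⟨p, t⟩
      · exact absurd hℓ hne
      · exact ⟨p, t, rfl⟩
    have hw : cancel (v⁻¹ * u)⁻¹ (bl η p) + Rb η p < FreeGroup.norm (bl η p) := by
      rcases p with ⟨c, e⟩
      have hvu : (v⁻¹ * u)⁻¹ = u⁻¹ * v := by rw [mul_inv_rev, inv_inv]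
      cases e
      · -- negative letter : use hR
        have hcan : cancel (v⁻¹ * u)⁻¹ (bl η (c, false))
            = cancel (η (FreeGroup.of c)) (v⁻¹ * u) := by
          rw [cancel_inv ((v⁻¹ * u)⁻¹) (bl η (c, false))]
          simp [bl, bpow]
        rw [hcan]
        have := hR c
        rw [remnantSurvivesRightMul] at this
        simpa [Rb, bl, norm_bpow] using this
      · have := hL c
        rw [remnantSurvivesLeftMul] at this
        simp only [Rb, bl, bpow, if_true, norm_bpow]
        rw [hvu]
        simpa using this
    have hprod : v⁻¹ * u = (((p :: t).map (bl η)).prod) := by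
      rw [← hpt, ← eta_mk, hmk, ← key]
    exact main_ne η hrem (v⁻¹ * u) p t (hpt ▸ hchain) hw hprod
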